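/- Let k be a field, let W and V be finite-dimensional k-vector spaces, and let A : W → V be a k-linear map. For D ∈ Hom_k(V, W) the following are equivalent: (i) trace(T ∘ D) = 0 for every T ∈ Hom_k(W, V) with T(ker A) ⊆ range A; (ii) D ∘ A = 0 and A ∘ D = 0. In other words, under the trace pairing Hom_k(W,V) × Hom_k(V,W) → k, (T, D) ↦ tr(T ∘ D), the annihilator of the subspace { T : T(ker A) ⊆ range A } is exactly { D : D ∘ A = 0 and A ∘ D = 0 }. -/

import Mathlib

open LinearMap

lemma trace_rankOne (k : Type*) [Field k] (V : Type*) [AddCommGroup V] [Module k V]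
    [FiniteDimensional k V] (f : V →ₗ[k] k) (v : V) :
    LinearMap.trace k V (f.smulRight v) = f v := by
  have : f.smulRight v = dualTensorHom k V V (f ⊗ₜ v) := by
    ext x; simp [dualTensorHom_apply]
  rw [this, trace_eq_contract_apply, contractLeft_apply]

/-- Under the trace pairing on `Hom(W,V) × Hom(V,W)`, the annihilator of the subspace
`{T : T (ker A) ⊆ range A}` is exactly `{D : D ∘ A = 0 and A ∘ D = 0}`. -/
theorem stmt_3 (k : Type*) [Field k] (V W : Type*) [AddCommGroup V] [Module k V]
    [AddCommGroup W] [Module k W] [FiniteDimensional k V] [FiniteDimensional k W]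
    (A : W →ₗ[k] V) (D : V →ₗ[k] W) :
    (∀ T : W →ₗ[k] V, (∀ x ∈ LinearMap.ker A, T x ∈ LinearMap.range A) →
      LinearMap.trace k V (T ∘ₗ D) = 0) ↔ (D ∘ₗ A = 0 ∧ A ∘ₗ D = 0) := by
  have key : ∀ (f : W →ₗ[k] k) (v : V),
      LinearMap.trace k V ((f.smulRight v) ∘ₗ D) = f (D v) := by
    intro f v
    have e : (f.smulRight v) ∘ₗ D = (f ∘ₗ D).smulRight v := by ext x; simp
    rw [e, trace_rankOne]; simp
  constructor
  · intro h
    constructor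
    · -- D ∘ A = 0
      ext w
      simp only [comp_apply, LinearMap.zero_apply]
      rw [← Module.forall_dual_apply_eq_zero_iff k]
      intro f
      have := h (f.smulRight (A w)) (fun x _ => Submodule.smul_mem _ _ ⟨w, rfl⟩)
      rw [key] at this
      exact this
    · -- A ∘ D = 0
      ext v
      simp only [comp_apply, LinearMap.zero_apply]
      have hm : D v ∈ LinearMap.ker A := by
        rw [← Submodule.Quotient.mk_eq_zero (LinearMap.ker A),
          ← Module.forall_dual_apply_eq_zero_iff k]
        intro g
        have hf : ∀ x ∈ LinearMap.ker A, (g ∘ₗ (LinearMap.ker A).mkQ) x = 0 := by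
          intro x hx
          simp [(Submodule.Quotient.mk_eq_zero _).2 hx]
        have := h ((g ∘ₗ (LinearMap.ker A).mkQ).smulRight v) (by
          intro x hx
          rw [smulRight_apply, hf x hx, zero_smul]
          exact Submodule.zero_mem _)
        rw [key] at this
        simpa using this
      simpa using hm
  · rintro ⟨hDA, hAD⟩ T hT
    have key2 : D ∘ₗ (T ∘ₗ D) = 0 := by
      ext v
      have h1 : D v ∈ LinearMap.ker A := by
        simpa using LinearMap.ext_iff.mp hAD v
      obtain ⟨w, hw⟩ := hT (D v) h1
      have h2 : D (A w) = 0 := by simpa using LinearMap.ext_iff.mp hDA w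
      simp [← hw, h2]
    have hnil : IsNilpotent (T ∘ₗ D : Module.End k V) := by
      refine ⟨2, ?_⟩
      ext v
      have hk : D (T (D v)) = 0 := by simpa using LinearMap.ext_iff.mp key2 v
      simp [pow_two, Module.End.mul_apply, hk]
    exact (isNilpotent_trace_of_isNilpotent hnil).eq_zero
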